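/- The 3-dimensional spined cube SQ_3 is isomorphic to the Cayley graph of the cyclic group Z/8 with connection set {a, a^{-1}, a^4} where a is a generator; in particular SQ_3 is vertex-transitive. -/
import Mathlib


/-- The "difference vector" of the neighbor rules of the spined cube, `i` being the
0-based index of the flipped bit. -/
def sqDelta (n : ℕ) (x : Fin n → ZMod 2) (i : Fin n) : Fin n → ZMod 2 :=
  fun j =>
    (if j = i then 1 else 0) +
    (if i.val + 5 ≤ n then
      (if j.val = i.val + 1 then x ⟨n - 2, by have := i.isLt; omega⟩ else 0) +
      (if j.val = i.val + 2 then x ⟨n - 1, by have := i.isLt; omega⟩ else 0)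
    else if n ≤ i.val + 2 then 0
    else (if j.val = i.val + 1 then x ⟨n - 1, by have := i.isLt; omega⟩ else 0))

/-- The `n`-dimensional spined cube `SQ_n`. -/
def spinedCube (n : ℕ) : SimpleGraph (Fin n → ZMod 2) :=
  SimpleGraph.fromRel (fun x y => ∃ i : Fin n, y = x + sqDelta n x i)

/-- The Cayley graph of an additive group `G` with connection set `S`. -/
def cayleyGraph (G : Type*) [AddGroup G] (S : Set G) : SimpleGraph G :=
  SimpleGraph.fromRel (fun g h => h - g ∈ S)

instance : DecidablePred (· ∈ ({1, -1, 4} : Set (ZMod 8))) := fun x =>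
  decidable_of_iff (x = 1 ∨ x = -1 ∨ x = 4) (by simp)

instance : DecidableRel (cayleyGraph (ZMod 8) {1, -1, 4}).Adj := fun g h => by
  unfold cayleyGraph; exact inferInstanceAs (Decidable (_ ∧ (_ ∨ _)))

instance : DecidableRel (spinedCube 3).Adj := fun x y => by
  unfold spinedCube; exact inferInstanceAs (Decidable (_ ∧ (_ ∨ _)))

/-- The explicit vertex bijection, as a table. -/
def tbl : (Fin 3 → ZMod 2) → ZMod 8 := fun x =>
  if x 0 = 0 then
    (if x 1 = 0 then (if x 2 = 0 then 0 else 1) else (if x 2 = 0 then 4 else 5))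
  else
    (if x 1 = 0 then (if x 2 = 0 then 7 else 6) else (if x 2 = 0 then 3 else 2))

noncomputable def myEquiv : (Fin 3 → ZMod 2) ≃ ZMod 8 :=
  Equiv.ofBijective tbl (by decide)

noncomputable def myIso : spinedCube 3 ≃g cayleyGraph (ZMod 8) {1, -1, 4} where
  toEquiv := myEquiv
  map_rel_iff' := by
    have : ∀ x y : Fin 3 → ZMod 2,
        (cayleyGraph (ZMod 8) {1, -1, 4}).Adj (tbl x) (tbl y) ↔ (spinedCube 3).Adj x y := by
      decide
    intro x y
    exact this x y

def cayleyTranslate (c : ZMod 8) :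
    cayleyGraph (ZMod 8) {1, -1, 4} ≃g cayleyGraph (ZMod 8) {1, -1, 4} where
  toEquiv := Equiv.addRight c
  map_rel_iff' := by
    intro g h
    simp [cayleyGraph, add_sub_add_right_eq_sub, add_right_cancel_iff]

/-- `SQ_3` is isomorphic to `Cay(ℤ/8, {1, -1, 4})`; in particular it is
vertex-transitive. -/
theorem sq3_iso_cayley_and_vertexTransitive :
    Nonempty (spinedCube 3 ≃g cayleyGraph (ZMod 8) {1, -1, 4}) ∧
    ∀ u v : Fin 3 → ZMod 2, ∃ e : spinedCube 3 ≃g spinedCube 3, e u = v := by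
  refine ⟨⟨myIso⟩, fun u v => ?_⟩
  refine ⟨(myIso.trans (cayleyTranslate (myIso v - myIso u))).trans myIso.symm, ?_⟩
  simp [cayleyTranslate, myIso]
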